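/- Let d > 1 be an integer and let A and B be two normal d-collections. If span_d(A) = span_d(B), then A = B. -/

import Mathlib

/-- The span of a `d`-collection `A : ℕ →₀ ℕ` (where `A i` is the multiplicity of the
token `d ^ i`): the set of all sums `∑ i, c i * d ^ i` over sub-collections `c ≤ A`. -/
def dspan (d : ℕ) (A : ℕ →₀ ℕ) : Set ℕ :=
  {n : ℕ | ∃ c : ℕ →₀ ℕ, (∀ i, c i ≤ A i) ∧ n = c.sum (fun i m => m * d ^ i)}

/-- The total sum `∑ i, a_i * d ^ i` of a `d`-collection. -/
def dsum (d : ℕ) (A : ℕ →₀ ℕ) : ℕ := A.sum (fun i m => m * d ^ i)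

/-- Elementary exchange at index `i`: replace `d` tokens `d ^ i` by one token `d ^ (i+1)`. -/
noncomputable def exch (d i : ℕ) (A : ℕ →₀ ℕ) : ℕ →₀ ℕ :=
  A - Finsupp.single i d + Finsupp.single (i + 1) 1

namespace SpanUnique

def Tpart (d : ℕ) (A : ℕ →₀ ℕ) (k : ℕ) : ℕ := ∑ i ∈ Finset.range k, A i * d ^ i

lemma Tpart_mono (d : ℕ) (A : ℕ →₀ ℕ) {k k' : ℕ} (h : k ≤ k') :
    Tpart d A k ≤ Tpart d A k' :=
  Finset.sum_le_sum_of_subset (Finset.range_subset_range.2 h)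

lemma exists_bound (A : ℕ →₀ ℕ) : ∃ N, ∀ i, N ≤ i → A i = 0 := by
  obtain ⟨N, hN⟩ := A.support.exists_nat_subset_range
  refine ⟨N, fun i hi => ?_⟩
  by_contra h
  have h2 := hN (Finsupp.mem_support_iff.2 h)
  rw [Finset.mem_range] at h2
  omega

lemma dsum_eq_Tpart (d : ℕ) (A : ℕ →₀ ℕ) {N : ℕ} (hN : ∀ i, N ≤ i → A i = 0) :
    dsum d A = Tpart d A N := by
  rw [dsum, Tpart]
  apply Finsupp.sum_of_support_subset
  · intro i hi
    rw [Finset.mem_range]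
    by_contra h
    exact (Finsupp.mem_support_iff.1 hi) (hN i (by omega))
  · intro i _; exact zero_mul _

lemma Tpart_le_dsum (d : ℕ) (A : ℕ →₀ ℕ) (k : ℕ) : Tpart d A k ≤ dsum d A := by
  obtain ⟨N, hN⟩ := exists_bound A
  have h2 : ∀ i, max N k ≤ i → A i = 0 := fun i hi => hN i (le_trans (le_max_left _ _) hi)
  rw [dsum_eq_Tpart d A h2]
  exact Tpart_mono d A (le_max_right N k)

lemma dsum_mem (d : ℕ) (A : ℕ →₀ ℕ) : dsum d A ∈ dspan d A := ⟨A, fun _ => le_rfl, rfl⟩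

lemma le_dsum {d : ℕ} {A : ℕ →₀ ℕ} {n : ℕ} (hn : n ∈ dspan d A) : n ≤ dsum d A := by
  obtain ⟨c, hc, rfl⟩ := hn
  obtain ⟨N, hN⟩ := exists_bound A
  have hNc : ∀ i, N ≤ i → c i = 0 := fun i hi => Nat.le_zero.1 ((hN i hi) ▸ hc i)
  have h1 : c.sum (fun i m => m * d ^ i) = dsum d c := rfl
  rw [h1, dsum_eq_Tpart d c hNc, dsum_eq_Tpart d A hN]
  exact Finset.sum_le_sum fun i _ => Nat.mul_le_mul_right _ (hc i)

lemma dsum_eq_of_span {d : ℕ} {A B : ℕ →₀ ℕ} (h : dspan d A = dspan d B) :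
    dsum d A = dsum d B :=
  le_antisymm (le_dsum (h ▸ dsum_mem d A)) (le_dsum (h.symm ▸ dsum_mem d B))

/-- Core congruence: a collection sum is congruent to its `k`-partial sum mod `d^k`. -/
lemma sum_mod_eq (d : ℕ) (c : ℕ →₀ ℕ) (k : ℕ) :
    (c.sum fun i m => m * d ^ i) % d ^ k = Tpart d c k % d ^ k := by
  obtain ⟨N0, hN0⟩ := exists_bound c
  have hN : ∀ i, max N0 k ≤ i → c i = 0 := fun i hi => hN0 i (le_trans (le_max_left _ _) hi)
  set N := max N0 k with hNdef
  have h1 : c.sum (fun i m => m * d ^ i) = Tpart d c N := dsum_eq_Tpart d c hN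
  rw [h1, Tpart, Tpart]
  have hkN : k ≤ N := le_max_right _ _
  have hsplit : ∑ i ∈ Finset.range N, c i * d ^ i
      = (∑ i ∈ Finset.range k, c i * d ^ i) + ∑ i ∈ Finset.Ico k N, c i * d ^ i := by
    rw [Finset.range_eq_Ico, Finset.range_eq_Ico]
    exact (Finset.sum_Ico_consecutive (fun i => c i * d ^ i) (Nat.zero_le k) hkN).symm
  have hdvd : d ^ k ∣ ∑ i ∈ Finset.Ico k N, c i * d ^ i :=
    Finset.dvd_sum fun i hi => Dvd.dvd.mul_left (pow_dvd_pow d (Finset.mem_Ico.1 hi).1) _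
  obtain ⟨t, ht⟩ := hdvd
  rw [hsplit, ht, Nat.add_mul_mod_self_left]

lemma Tpart_le_Tpart {d : ℕ} {c A : ℕ →₀ ℕ} (hc : ∀ i, c i ≤ A i) (k : ℕ) :
    Tpart d c k ≤ Tpart d A k :=
  Finset.sum_le_sum fun i _ => Nat.mul_le_mul_right _ (hc i)

/-- Necessity: every span element has all its residues bounded by the partial sums. -/
lemma mod_le_Tpart {d : ℕ} {A : ℕ →₀ ℕ} {n : ℕ} (hn : n ∈ dspan d A) (k : ℕ) :
    n % d ^ k ≤ Tpart d A k := by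
  obtain ⟨c, hc, rfl⟩ := hn
  rw [sum_mod_eq]
  exact le_trans (Nat.mod_le _ _) (Tpart_le_Tpart hc k)

/-- Greedy construction: a number passing all tests and below `Tpart K` is representable
with tokens of index `< K`. -/
lemma rep_of_tests (d : ℕ) (hd : 1 < d) (A : ℕ →₀ ℕ) :
    ∀ K n, n ≤ Tpart d A K → (∀ k, n % d ^ k ≤ Tpart d A k) →
    ∃ c : ℕ →₀ ℕ, (∀ i, c i ≤ A i) ∧ (∀ i, K ≤ i → c i = 0) ∧
      n = c.sum (fun i m => m * d ^ i) := by
  intro K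
  induction K with
  | zero =>
    intro n hn _
    have : n = 0 := by simpa [Tpart] using hn
    exact ⟨0, fun i => Nat.zero_le _, fun i _ => rfl, by simp [this]⟩
  | succ K ih =>
    intro n hn htest
    have hpow : 0 < d ^ K := pow_pos (by omega) K
    set q := n / d ^ K with hq
    set cK := min (A K) q with hcK
    have hdm : d ^ K * q + n % d ^ K = n := Nat.div_add_mod n (d ^ K)
    have hqle : cK * d ^ K ≤ q * d ^ K := Nat.mul_le_mul_right _ (min_le_right _ _)
    have hqn : q * d ^ K ≤ n := Nat.div_mul_le_self n (d ^ K)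
    set n' := n - cK * d ^ K with hn'
    have hsucc : Tpart d A (K + 1) = Tpart d A K + A K * d ^ K := Finset.sum_range_succ _ _
    have hcomm : d ^ K * q = q * d ^ K := Nat.mul_comm _ _
    have hn'le : n' ≤ Tpart d A K := by
      rcases le_or_gt (A K) q with hmin | hmin
      · have h1 : cK = A K := min_eq_left hmin
        have h2 : cK * d ^ K = A K * d ^ K := by rw [h1]
        rw [hsucc] at hn
        omega
      · have h1 : cK = q := min_eq_right (le_of_lt hmin)
        have h2 : cK * d ^ K = q * d ^ K := by rw [h1]
        have h3 := htest K
        omega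
    have htest' : ∀ k, n' % d ^ k ≤ Tpart d A k := by
      intro k
      rcases le_or_gt k K with hk | hk
      · have hdvd : d ^ k ∣ cK * d ^ K := Dvd.dvd.mul_left (pow_dvd_pow d hk) _
        obtain ⟨t, ht⟩ := hdvd
        have h4 : n = n' + d ^ k * t := by omega
        have h5 : n % d ^ k = n' % d ^ k := by
          rw [h4, Nat.add_mul_mod_self_left]
        rw [← h5]; exact htest k
      · exact le_trans (Nat.mod_le _ _) (le_trans hn'le (Tpart_mono d A (by omega)))
    obtain ⟨c', hc'le, hc'0, hc'sum⟩ := ih n' hn'le htest'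
    refine ⟨c' + Finsupp.single K cK, ?_, ?_, ?_⟩
    · intro i
      rcases eq_or_ne i K with heq | hne
      · rw [Finsupp.add_apply, heq, hc'0 K le_rfl, Finsupp.single_eq_same]
        have := min_le_left (A K) q
        omega
      · rw [Finsupp.add_apply, Finsupp.single_eq_of_ne' (Ne.symm hne)]
        simpa using hc'le i
    · intro i hi
      have h1 : c' i = 0 := hc'0 i (by omega)
      have h2 : Finsupp.single K cK i = 0 := Finsupp.single_eq_of_ne' (show K ≠ i by omega)
      rw [Finsupp.add_apply, h1, h2]
    · rw [Finsupp.sum_add_index' (fun a : ℕ => zero_mul (d ^ a))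
        (fun a b₁ b₂ => add_mul b₁ b₂ (d ^ a))]
      have hs : (Finsupp.single K cK).sum (fun i m => m * d ^ i) = cK * d ^ K :=
        Finsupp.sum_single_index (by simp)
      rw [hs]
      omega

/-- Sufficiency: passing all residue tests implies span membership. -/
lemma mem_of_tests {d : ℕ} (hd : 1 < d) {A : ℕ →₀ ℕ} {n : ℕ}
    (htest : ∀ k, n % d ^ k ≤ Tpart d A k) : n ∈ dspan d A := by
  have h1 : n < d ^ n := by
    calc n < 2 ^ n := Nat.lt_two_pow_self
    _ ≤ d ^ n := Nat.pow_le_pow_left hd n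
  have h2 : n ≤ Tpart d A n := by
    have := htest n
    rwa [Nat.mod_eq_of_lt h1] at this
  obtain ⟨c, hc, _, hsum⟩ := rep_of_tests d hd A n n h2 htest
  exact ⟨c, hc, hsum⟩

lemma Tpart_bound {d : ℕ} (hd : 1 < d) {A : ℕ →₀ ℕ} (hA : ∀ i, A i ≤ 2 * (d - 1)) (k : ℕ) :
    Tpart d A k + 2 ≤ 2 * d ^ k := by
  obtain ⟨e, rfl⟩ : ∃ e, d = e + 2 := ⟨d - 2, by omega⟩
  induction k with
  | zero => simp [Tpart]
  | succ k ih =>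
    have hs : Tpart (e+2) A (k+1) = Tpart (e+2) A k + A k * (e+2) ^ k :=
      Finset.sum_range_succ _ _
    have h1 : A k ≤ 2 * (e + 1) := by have := hA k; omega
    have h2 : A k * (e+2) ^ k ≤ (2 * (e+1)) * (e+2) ^ k := Nat.mul_le_mul_right _ h1
    have h3 : (2 * (e+1)) * (e+2) ^ k = 2 * (e * (e+2) ^ k) + 2 * (e+2) ^ k := by ring
    have h4 : 2 * (e+2) ^ (k+1) = 2 * (e * (e+2) ^ k) + 4 * (e+2) ^ k := by ring
    omega

/-- Shift a collection down by `K` indices. -/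
noncomputable def shiftF (K : ℕ) (A : ℕ →₀ ℕ) : ℕ →₀ ℕ :=
  Finsupp.comapDomain (· + K) A (fun a _ b _ h => by simp only at h; omega)

lemma shiftF_apply (K : ℕ) (A : ℕ →₀ ℕ) (i : ℕ) : shiftF K A i = A (i + K) := rfl

lemma shift_sum (d K : ℕ) (c' : ℕ →₀ ℕ) :
    (Finsupp.mapDomain (· + K) c').sum (fun i m => m * d ^ i)
      = d ^ K * c'.sum (fun i m => m * d ^ i) := by
  rw [Finsupp.sum_mapDomain_index (h := fun i m => m * d ^ i) (fun b => zero_mul _)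
    (fun b m1 m2 => add_mul m1 m2 _)]
  rw [Finsupp.mul_sum]
  apply Finsupp.sum_congr
  intro i _
  rw [pow_add]
  ring

lemma shift_mem_iff {d K : ℕ} (hd : 1 < d) {A : ℕ →₀ ℕ} (hT : Tpart d A K < d ^ K) (n : ℕ) :
    n ∈ dspan d (shiftF K A) ↔ d ^ K * n ∈ dspan d A := by
  have hinj : Function.Injective (· + K : ℕ → ℕ) := fun a b h => by simp only at h; omega
  have hpow : 0 < d ^ K := pow_pos (by omega) K
  constructor
  · rintro ⟨c', hc', rfl⟩
    refine ⟨Finsupp.mapDomain (· + K) c', ?_, (shift_sum d K c').symm⟩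
    intro i
    rcases le_or_gt K i with hi | hi
    · have h1 : i = (i - K) + K := by omega
      rw [h1, Finsupp.mapDomain_apply hinj]
      exact hc' (i - K)
    · rw [Finsupp.mapDomain_notin_range]
      · exact Nat.zero_le _
      · rintro ⟨a, ha⟩
        simp only at ha
        omega
  · rintro ⟨c, hc, hsum⟩
    have hlow : ∀ i, i < K → c i = 0 := by
      have h0 : (d ^ K * n) % d ^ K = 0 := Nat.mul_mod_right _ _
      have h1 : Tpart d c K % d ^ K = 0 := by rw [← sum_mod_eq d c K, ← hsum]; exact h0
      have h2 : Tpart d c K ≤ Tpart d A K := Tpart_le_Tpart hc K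
      have h3 : Tpart d c K = 0 := by
        rwa [Nat.mod_eq_of_lt (by omega)] at h1
      intro i hi
      have h4 := Finset.sum_eq_zero_iff.1 h3 i (Finset.mem_range.2 hi)
      rcases Nat.mul_eq_zero.1 h4 with h5 | h5
      · exact h5
      · exfalso
        have := pow_pos (show 0 < d by omega) i
        omega
    have hrep : c = Finsupp.mapDomain (· + K) (shiftF K c) := by
      ext i
      rcases le_or_gt K i with hi | hi
      · have h1 : i = (i - K) + K := by omega
        rw [h1, Finsupp.mapDomain_apply hinj, shiftF_apply]
      · rw [hlow i hi, Finsupp.mapDomain_notin_range]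
        rintro ⟨a, ha⟩
        simp only at ha
        omega
    refine ⟨shiftF K c, ?_, ?_⟩
    · intro i
      rw [shiftF_apply, shiftF_apply]
      exact hc (i + K)
    · have h7 : (c.sum fun i m => m * d ^ i)
          = d ^ K * (shiftF K c).sum (fun i m => m * d ^ i) := by
        conv_lhs => rw [hrep]
        exact shift_sum d K (shiftF K c)
      exact Nat.eq_of_mul_eq_mul_left hpow (hsum.trans h7)

lemma dsum_eq_zero {d : ℕ} (hd : 0 < d) {A : ℕ →₀ ℕ} (h : dsum d A = 0) : A = 0 := by
  ext i
  obtain ⟨N, hN⟩ := exists_bound A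
  have h2 : ∀ j, max N (i+1) ≤ j → A j = 0 := fun j hj => hN j (le_trans (le_max_left _ _) hj)
  rw [dsum_eq_Tpart d A h2, Tpart] at h
  have h3 := Finset.sum_eq_zero_iff.1 h i (Finset.mem_range.2 (by omega))
  rcases Nat.mul_eq_zero.1 h3 with h5 | h5
  · simpa using h5
  · exfalso
    have := pow_pos hd i
    omega

/-- Saturated low parts are rigid: determined by the value of the partial sum at the top. -/
lemma low_rigid {d : ℕ} (hd : 1 < d) {A B : ℕ →₀ ℕ}
    (hA : ∀ i, A i ≤ 2 * (d - 1)) (hB : ∀ i, B i ≤ 2 * (d - 1)) :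
    ∀ K, (∀ k, k < K → d ^ k ≤ Tpart d A k + 1) → (∀ k, k < K → d ^ k ≤ Tpart d B k + 1) →
    Tpart d A K = Tpart d B K → ∀ i, i < K → A i = B i := by
  intro K
  induction K with
  | zero => intro _ _ _ i hi; omega
  | succ K ih =>
    intro hsA hsB hT i hi
    have hsuccA : Tpart d A (K+1) = Tpart d A K + A K * d ^ K := Finset.sum_range_succ _ _
    have hsuccB : Tpart d B (K+1) = Tpart d B K + B K * d ^ K := Finset.sum_range_succ _ _
    have hbA : Tpart d A K + 2 ≤ 2 * d ^ K := Tpart_bound hd hA K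
    have hbB : Tpart d B K + 2 ≤ 2 * d ^ K := Tpart_bound hd hB K
    have hKK : A K = B K := by
      rcases lt_trichotomy (A K) (B K) with hlt | heq | hgt
      · exfalso
        have e1 : (A K + 1) * d ^ K = A K * d ^ K + d ^ K := by ring
        have h1 : (A K + 1) * d ^ K ≤ B K * d ^ K := Nat.mul_le_mul_right _ (by omega)
        have h2 : d ^ K ≤ Tpart d B K + 1 := hsB K (by omega)
        omega
      · exact heq
      · exfalso
        have e1 : (B K + 1) * d ^ K = B K * d ^ K + d ^ K := by ring
        have h1 : (B K + 1) * d ^ K ≤ A K * d ^ K := Nat.mul_le_mul_right _ (by omega)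
        have h2 : d ^ K ≤ Tpart d A K + 1 := hsA K (by omega)
        omega
    rcases lt_or_ge i K with hiK | hiK
    · have hTK : Tpart d A K = Tpart d B K := by
        have h1 : A K * d ^ K = B K * d ^ K := by rw [hKK]
        omega
      exact ih (fun k hk => hsA k (by omega)) (fun k hk => hsB k (by omega)) hTK i hiK
    · have : i = K := by omega
      rw [this]
      exact hKK

lemma key (d : ℕ) (hd : 1 < d) :
    ∀ s (A B : ℕ →₀ ℕ), (∀ i, A i ≤ 2 * (d - 1)) → (∀ i, B i ≤ 2 * (d - 1)) →
      dspan d A = dspan d B → dsum d A ≤ s → A = B := by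
  intro s
  induction s using Nat.strong_induction_on with
  | _ s ih =>
    intro A B hA hB hspan hle
    have hds : dsum d A = dsum d B := dsum_eq_of_span hspan
    have exA : ∃ k, Tpart d A k + 2 ≤ d ^ k := by
      refine ⟨dsum d A + 2, ?_⟩
      have h1 := Tpart_le_dsum d A (dsum d A + 2)
      have h2 : dsum d A + 2 < 2 ^ (dsum d A + 2) := Nat.lt_two_pow_self
      have h3 : 2 ^ (dsum d A + 2) ≤ d ^ (dsum d A + 2) := Nat.pow_le_pow_left hd _
      omega
    have exB : ∃ k, Tpart d B k + 2 ≤ d ^ k := by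
      refine ⟨dsum d B + 2, ?_⟩
      have h1 := Tpart_le_dsum d B (dsum d B + 2)
      have h2 : dsum d B + 2 < 2 ^ (dsum d B + 2) := Nat.lt_two_pow_self
      have h3 : 2 ^ (dsum d B + 2) ≤ d ^ (dsum d B + 2) := Nat.pow_le_pow_left hd _
      omega
    set KA := Nat.find exA with hKAdef
    set KB := Nat.find exB with hKBdef
    have hspecA : Tpart d A KA + 2 ≤ d ^ KA := Nat.find_spec exA
    have hspecB : Tpart d B KB + 2 ≤ d ^ KB := Nat.find_spec exB
    have hsatA : ∀ k, k < KA → d ^ k ≤ Tpart d A k + 1 := by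
      intro k hk
      have := Nat.find_min exA hk
      omega
    have hsatB : ∀ k, k < KB → d ^ k ≤ Tpart d B k + 1 := by
      intro k hk
      have := Nat.find_min exB hk
      omega
    have hmemA : ∀ m, m ≤ Tpart d A KA → m ∈ dspan d A := by
      intro m hm
      apply mem_of_tests hd
      intro k
      rcases lt_or_ge k KA with hk | hk
      · have h1 : m % d ^ k < d ^ k := Nat.mod_lt _ (pow_pos (by omega) k)
        have h2 := hsatA k hk
        omega
      · exact le_trans (Nat.mod_le _ _) (le_trans hm (Tpart_mono d A hk))
    have hmemB : ∀ m, m ≤ Tpart d B KB → m ∈ dspan d B := by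
      intro m hm
      apply mem_of_tests hd
      intro k
      rcases lt_or_ge k KB with hk | hk
      · have h1 : m % d ^ k < d ^ k := Nat.mod_lt _ (pow_pos (by omega) k)
        have h2 := hsatB k hk
        omega
      · exact le_trans (Nat.mod_le _ _) (le_trans hm (Tpart_mono d B hk))
    have hnotA : Tpart d A KA + 1 ∉ dspan d A := by
      intro hmem
      have h1 := mod_le_Tpart hmem KA
      rw [Nat.mod_eq_of_lt (by omega)] at h1
      omega
    have hnotB : Tpart d B KB + 1 ∉ dspan d B := by
      intro hmem
      have h1 := mod_le_Tpart hmem KB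
      rw [Nat.mod_eq_of_lt (by omega)] at h1
      omega
    have hTeq : Tpart d A KA = Tpart d B KB := by
      rcases lt_trichotomy (Tpart d A KA) (Tpart d B KB) with hc | hc | hc
      · exfalso
        have h1 := hmemB (Tpart d A KA + 1) (by omega)
        rw [← hspan] at h1
        exact hnotA h1
      · exact hc
      · exfalso
        have h1 := hmemA (Tpart d B KB + 1) (by omega)
        rw [hspan] at h1
        exact hnotB h1
    have hKeq : KA = KB := by
      rcases lt_trichotomy KA KB with hc | hc | hc
      · exfalso
        have h1 := Nat.find_min exB hc
        have h2 : Tpart d B KA ≤ Tpart d B KB := Tpart_mono d B (le_of_lt hc)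
        omega
      · exact hc
      · exfalso
        have h1 := Nat.find_min exA hc
        have h2 : Tpart d A KB ≤ Tpart d A KA := Tpart_mono d A (le_of_lt hc)
        omega
    have hTeq' : Tpart d A KA = Tpart d B KA := by rw [hTeq, hKeq]
    have hlow : ∀ i, i < KA → A i = B i :=
      low_rigid hd hA hB KA hsatA (fun k hk => hsatB k (by omega)) hTeq'
    have hTA : Tpart d A KA < d ^ KA := by omega
    have hTB : Tpart d B KA < d ^ KA := by omega
    have hspan' : dspan d (shiftF KA A) = dspan d (shiftF KA B) := by
      ext n
      rw [shift_mem_iff hd hTA n, shift_mem_iff hd hTB n, hspan]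
    have hKA1 : 1 ≤ KA := by
      by_contra hcon
      have h0 : KA = 0 := by omega
      rw [h0] at hspecA
      simp [Tpart] at hspecA
    have hdK : 2 ≤ d ^ KA := by
      calc 2 ≤ d := by omega
      _ = d ^ 1 := (pow_one d).symm
      _ ≤ d ^ KA := Nat.pow_le_pow_right (by omega) hKA1
    have hA' : ∀ i, shiftF KA A i ≤ 2 * (d - 1) := by
      intro i
      rw [shiftF_apply]
      exact hA (i + KA)
    have hB' : ∀ i, shiftF KA B i ≤ 2 * (d - 1) := by
      intro i
      rw [shiftF_apply]
      exact hB (i + KA)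
    have hhigh : shiftF KA A = shiftF KA B := by
      rcases Nat.eq_zero_or_pos (dsum d (shiftF KA A)) with h0 | hpos
      · have h1 : dsum d (shiftF KA B) = 0 := by
          rw [← dsum_eq_of_span hspan']
          exact h0
        rw [dsum_eq_zero (by omega) h0, dsum_eq_zero (by omega) h1]
      · have hmem1 : d ^ KA * dsum d (shiftF KA A) ∈ dspan d A :=
          (shift_mem_iff hd hTA _).1 (dsum_mem d _)
        have h2 : d ^ KA * dsum d (shiftF KA A) ≤ dsum d A := le_dsum hmem1
        have h3 : dsum d (shiftF KA A) < dsum d A := by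
          have h4 : 2 * dsum d (shiftF KA A) ≤ d ^ KA * dsum d (shiftF KA A) :=
            Nat.mul_le_mul_right _ hdK
          omega
        exact ih (dsum d (shiftF KA A)) (by omega) (shiftF KA A) (shiftF KA B) hA' hB'
          hspan' le_rfl
    ext i
    rcases lt_or_ge i KA with hi | hi
    · exact hlow i hi
    · have h2 : shiftF KA A (i - KA) = shiftF KA B (i - KA) := by rw [hhigh]
      rw [shiftF_apply, shiftF_apply] at h2
      have h1 : i - KA + KA = i := by omega
      rwa [h1] at h2

end SpanUnique

/-- Two normal `d`-collections with the same span are equal. -/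
theorem stmt_10 (d : ℕ) (hd : 1 < d) (A B : ℕ →₀ ℕ)
    (hA : ∀ i, A i ≤ 2 * (d - 1)) (hB : ∀ i, B i ≤ 2 * (d - 1))
    (h : dspan d A = dspan d B) : A = B :=
  SpanUnique.key d hd (dsum d A) A B hA hB h le_rfl
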